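/- In G_I, the elements u = g1 g2 g3 g2 and v = g2 g3 g1 g3 satisfy u^2 = e, v^2 = e and uv = vu; they lie in the kernel of rho; and the subgroup of G_I they generate is isomorphic to (Z/2Z)^2. -/
import Mathlib


namespace Stmt5

/-- Generators: `0 ↦ g1`, `1 ↦ g1'`, `2 ↦ g2`, `3 ↦ g3`, `4 ↦ g4`, `5 ↦ g5`. -/
def g (i : Fin 6) : FreeGroup (Fin 6) := FreeGroup.of i

/-- The braid relator `x y x (y x y)⁻¹`, i.e. `<x,y> = e`. -/
def braid (x y : FreeGroup (Fin 6)) : FreeGroup (Fin 6) := x * y * x * (y * x * y)⁻¹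

/-- The commutator relator `x y x⁻¹ y⁻¹`, i.e. `[x,y] = e`. -/
def comm (x y : FreeGroup (Fin 6)) : FreeGroup (Fin 6) := x * y * x⁻¹ * y⁻¹

/-- Relators of the group `G_I` from Theorem 3.4 (union of the Cayley cubic degeneration
and two planes, Type I).  Here `g 0 = g1`, `g 1 = g1'`, `g 2 = g2`, `g 3 = g3`,
`g 4 = g4`, `g 5 = g5`. -/
def rels : Set (FreeGroup (Fin 6)) :=
  { (g 0) ^ 2, (g 1) ^ 2, (g 2) ^ 2, (g 3) ^ 2, (g 4) ^ 2, (g 5) ^ 2,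
    comm (g 2) (g 4), comm (g 3) (g 5), comm (g 4) (g 5),
    braid (g 0) (g 2), braid (g 0) (g 4), braid (g 0) (g 5),
    braid (g 1) (g 2), braid (g 1) (g 4), braid (g 1) (g 5),
    braid (g 2) (g 3), braid (g 2) (g 5), braid (g 3) (g 4),
    comm (g 0) ((g 2)⁻¹ * g 3 * g 2), comm (g 1) ((g 2)⁻¹ * g 3 * g 2) }

/-- The presented group `G_I`. -/
abbrev GI := PresentedGroup rels


def F : Fin 6 → Equiv.Perm (Fin 10)
  | 0 => Equiv.swap 0 6 * Equiv.swap 1 5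
  | 1 => Equiv.swap 0 6 * Equiv.swap 1 5
  | 2 => Equiv.swap 0 2 * Equiv.swap 5 7
  | 3 => Equiv.swap 1 2 * Equiv.swap 6 7
  | 4 => Equiv.swap 1 3 * Equiv.swap 6 8
  | 5 => Equiv.swap 0 4 * Equiv.swap 5 9

lemma F_rels : ∀ r ∈ rels, FreeGroup.lift F r = 1 := by
  intro r hr
  simp only [rels, Set.mem_insert_iff, Set.mem_singleton_iff] at hr
  rcases hr with rfl|rfl|rfl|rfl|rfl|rfl|rfl|rfl|rfl|rfl|rfl|rfl|rfl|rfl|rfl|rfl|rfl|rfl|rfl|rfl <;>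
    simp only [g, braid, comm, map_mul, map_inv, map_pow, FreeGroup.lift_apply_of] <;> decide

noncomputable def φ : GI →* Equiv.Perm (Fin 10) := PresentedGroup.toGroup F_rels

lemma φ_of (i : Fin 6) : φ (PresentedGroup.of i) = F i := PresentedGroup.toGroup.of F_rels

lemma mk_rel {r : FreeGroup (Fin 6)} (h : r ∈ rels) : (QuotientGroup.mk r : GI) = 1 :=
  (QuotientGroup.eq_one_iff r).2 (Subgroup.subset_normalClosure h)

lemma sq_rel (i : Fin 6) (h : (g i)^2 ∈ rels) :
    (PresentedGroup.of i : GI) * PresentedGroup.of i = 1 := by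
  have := mk_rel h
  rw [g, pow_two, QuotientGroup.mk_mul] at this
  exact this

lemma ha : (PresentedGroup.of 0 : GI) * PresentedGroup.of 0 = 1 :=
  sq_rel 0 (by simp [rels])
lemma hb : (PresentedGroup.of 2 : GI) * PresentedGroup.of 2 = 1 :=
  sq_rel 2 (by simp [rels])
lemma hc : (PresentedGroup.of 3 : GI) * PresentedGroup.of 3 = 1 :=
  sq_rel 3 (by simp [rels])

lemma hab : (PresentedGroup.of 0 : GI) * PresentedGroup.of 2 * PresentedGroup.of 0
    = PresentedGroup.of 2 * PresentedGroup.of 0 * PresentedGroup.of 2 := by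
  have := mk_rel (show braid (g 0) (g 2) ∈ rels by simp [rels])
  rw [braid, g, g, QuotientGroup.mk_mul, QuotientGroup.mk_mul, QuotientGroup.mk_inv,
    QuotientGroup.mk_mul, QuotientGroup.mk_mul] at this
  exact mul_inv_eq_one.mp this

lemma hbc : (PresentedGroup.of 2 : GI) * PresentedGroup.of 3 * PresentedGroup.of 2
    = PresentedGroup.of 3 * PresentedGroup.of 2 * PresentedGroup.of 3 := by
  have := mk_rel (show braid (g 2) (g 3) ∈ rels by simp [rels])
  rw [braid, g, g, QuotientGroup.mk_mul, QuotientGroup.mk_mul, QuotientGroup.mk_inv,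
    QuotientGroup.mk_mul, QuotientGroup.mk_mul] at this
  exact mul_inv_eq_one.mp this

lemma hco : (PresentedGroup.of 0 : GI) * ((PresentedGroup.of 2)⁻¹ * PresentedGroup.of 3 * PresentedGroup.of 2)
    = ((PresentedGroup.of 2)⁻¹ * PresentedGroup.of 3 * PresentedGroup.of 2) * PresentedGroup.of 0 := by
  have := mk_rel (show comm (g 0) ((g 2)⁻¹ * g 3 * g 2) ∈ rels by simp [rels])
  rw [comm, g, g, g] at this
  simp only [QuotientGroup.mk_mul, QuotientGroup.mk_inv] at this
  rw [mul_inv_eq_one, mul_inv_eq_iff_eq_mul] at this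
  exact this


/-- Theorem 3.4 (intermediate step): in `G_I`, the elements `u = g1 g2 g3 g2` and
`v = g2 g3 g1 g3` are involutions, commute, lie in the kernel of `ρ`, and generate a
subgroup isomorphic to `(ℤ/2ℤ)²`. -/
theorem u_v_generate_klein (ρ : GI →* Equiv.Perm (Fin 5))
    (h1 : ρ (PresentedGroup.of 0) = Equiv.swap 0 1)
    (h1' : ρ (PresentedGroup.of 1) = Equiv.swap 0 1)
    (h2 : ρ (PresentedGroup.of 2) = Equiv.swap 0 2)
    (h3 : ρ (PresentedGroup.of 3) = Equiv.swap 1 2)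
    (h4 : ρ (PresentedGroup.of 4) = Equiv.swap 1 3)
    (h5 : ρ (PresentedGroup.of 5) = Equiv.swap 0 4) :
    ∀ u v : GI,
      u = PresentedGroup.of 0 * PresentedGroup.of 2 * PresentedGroup.of 3
            * PresentedGroup.of 2 →
      v = PresentedGroup.of 2 * PresentedGroup.of 3 * PresentedGroup.of 0
            * PresentedGroup.of 3 →
      u ^ 2 = 1 ∧ v ^ 2 = 1 ∧ u * v = v * u ∧
      u ∈ MonoidHom.ker ρ ∧ v ∈ MonoidHom.ker ρ ∧
      Nonempty (Subgroup.closure {u, v} ≃* Multiplicative (ZMod 2 × ZMod 2)) := by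
  intro u v hueq hveq
  set a := (PresentedGroup.of 0 : GI) with ha_def
  set b := (PresentedGroup.of 2 : GI) with hb_def
  set c := (PresentedGroup.of 3 : GI) with hc_def
  have hbinv : b⁻¹ = b := inv_eq_of_mul_eq_one_right hb
  have hcoP0 : a * (b * c * b) = (b * c * b) * a := by
    have := hco; rw [hbinv] at this; exact this
  have ha' : ∀ x : GI, a * (a * x) = x := fun x => by rw [← mul_assoc, ha, one_mul]
  have hb' : ∀ x : GI, b * (b * x) = x := fun x => by rw [← mul_assoc, hb, one_mul]
  have hc' : ∀ x : GI, c * (c * x) = x := fun x => by rw [← mul_assoc, hc, one_mul]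
  have hab' : ∀ x : GI, a * (b * (a * x)) = b * (a * (b * x)) := fun x => by
    calc a * (b * (a * x)) = (a * b * a) * x := by group
    _ = (b * a * b) * x := by rw [hab]
    _ = b * (a * (b * x)) := by group
  have hbc' : ∀ x : GI, b * (c * (b * x)) = c * (b * (c * x)) := fun x => by
    calc b * (c * (b * x)) = (b * c * b) * x := by group
    _ = (c * b * c) * x := by rw [hbc]
    _ = c * (b * (c * x)) := by group
  have hcoP : ∀ x : GI, a * (b * (c * (b * x))) = b * (c * (b * (a * x))) := fun x => by
    calc a * (b * (c * (b * x))) = (a * (b * c * b)) * x := by group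
    _ = ((b * c * b) * a) * x := by rw [hcoP0]
    _ = b * (c * (b * (a * x))) := by group
  -- u^2 = 1
  have hu' : ∀ x : GI, a*(b*(c*(b*(a*(b*(c*(b*x))))))) = x := fun x => by
    rw [hcoP, ha', hb', hc', hb']
  have huu : u * u = 1 := by
    calc u * u = a*(b*(c*(b*(a*(b*(c*(b*(1:GI)))))))) := by rw [hueq]; group
    _ = 1 := hu' 1
  -- v^2 = 1
  have hv' : ∀ x : GI, b*(c*(a*(c*(b*(c*(a*(c*x))))))) = x := fun x => by
    rw [← hbc', hcoP, ha', hbc', hc', hb', hc']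
  have hvv : v * v = 1 := by
    calc v * v = b*(c*(a*(c*(b*(c*(a*(c*(1:GI)))))))) := by rw [hveq]; group
    _ = 1 := hv' 1
  -- u*v = v*u
  have h1l : ∀ x : GI, a*(b*(c*x)) = b*(c*(b*(a*(b*x)))) := fun x => by
    have h := hcoP (b * x); rw [hb'] at h; exact h
  have hd : ∀ x : GI, b*(a*(b*(c*x))) = c*(b*(a*(b*x))) := fun x => by
    rw [h1l, hb']
  have huv : u * v = v * u := by
    have lhs : u * v = c*(b*(a*(b*(1:GI)))) := by
      calc u * v = a*(b*(c*(b*(b*(c*(a*(c*(1:GI)))))))) := by rw [hueq, hveq]; group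
      _ = c*(b*(a*(b*(1:GI)))) := by rw [hb', hc', hab', hd]
    have rhs : v * u = c*(b*(a*(b*(1:GI)))) := by
      calc v * u = b*(c*(a*(c*(a*(b*(c*(b*(1:GI)))))))) := by rw [hveq, hueq]; group
      _ = c*(b*(a*(b*(1:GI)))) := by rw [hcoP, ← hbc', hb', h1l, hbc', hc', hb', hab']
    rw [lhs, rhs]
  have hu2 : u ^ 2 = 1 := by rw [pow_two]; exact huu
  have hv2 : v ^ 2 = 1 := by rw [pow_two]; exact hvv
  -- kernel membership
  have hρu : u ∈ MonoidHom.ker ρ := by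
    rw [MonoidHom.mem_ker, hueq, map_mul, map_mul, map_mul, h1, h2, h3]
    decide
  have hρv : v ∈ MonoidHom.ker ρ := by
    rw [MonoidHom.mem_ker, hveq, map_mul, map_mul, map_mul, h1, h2, h3]
    decide
  -- nontriviality via φ
  have hune : u ≠ 1 := by
    intro h
    have hφ : φ u = F 0 * F 2 * F 3 * F 2 := by
      rw [hueq, map_mul, map_mul, map_mul, φ_of, φ_of, φ_of]
    rw [h, map_one] at hφ
    revert hφ; decide
  have hvne : v ≠ 1 := by
    intro h
    have hφ : φ v = F 2 * F 3 * F 0 * F 3 := by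
      rw [hveq, map_mul, map_mul, map_mul, φ_of, φ_of, φ_of]
    rw [h, map_one] at hφ
    revert hφ; decide
  have huvne : u * v ≠ 1 := by
    intro h
    have hφ : φ (u * v) = F 0 * F 2 * F 3 * F 2 * (F 2 * F 3 * F 0 * F 3) := by
      rw [hueq, hveq]
      simp only [ha_def, hb_def, hc_def, map_mul, φ_of]
    rw [h, map_one] at hφ
    revert hφ; decide
  -- power lemmas
  have hupow : ∀ k : ℕ, u ^ (k % 2) = u ^ k := fun k => by
    conv_rhs => rw [← Nat.div_add_mod k 2]
    rw [pow_add, pow_mul, hu2, one_pow, one_mul]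
  have hvpow : ∀ k : ℕ, v ^ (k % 2) = v ^ k := fun k => by
    conv_rhs => rw [← Nat.div_add_mod k 2]
    rw [pow_add, pow_mul, hv2, one_pow, one_mul]
  have huvC : Commute u v := huv
  -- the homomorphism ψ
  obtain ⟨ψ, hψ⟩ : ∃ ψ : Multiplicative (ZMod 2 × ZMod 2) →* GI,
      ∀ x, ψ x = u ^ (x.toAdd.1.val) * v ^ (x.toAdd.2.val) := by
    refine ⟨MonoidHom.mk' (fun x => u ^ (x.toAdd.1.val) * v ^ (x.toAdd.2.val)) ?_, fun x => rfl⟩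
    intro x y
    simp only [toAdd_mul, Prod.fst_add, Prod.snd_add, ZMod.val_add]
    rw [hupow, hvpow, pow_add, pow_add]
    calc u ^ x.toAdd.1.val * u ^ y.toAdd.1.val * (v ^ x.toAdd.2.val * v ^ y.toAdd.2.val)
        = u ^ x.toAdd.1.val * (u ^ y.toAdd.1.val * v ^ x.toAdd.2.val) * v ^ y.toAdd.2.val := by
          group
      _ = u ^ x.toAdd.1.val * (v ^ x.toAdd.2.val * u ^ y.toAdd.1.val) * v ^ y.toAdd.2.val := by
          rw [(huvC.pow_pow y.toAdd.1.val x.toAdd.2.val).eq]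
      _ = u ^ x.toAdd.1.val * v ^ x.toAdd.2.val * (u ^ y.toAdd.1.val * v ^ y.toAdd.2.val) := by
          group
  have hz : ∀ z : ZMod 2, z = 0 ∨ z = 1 := by decide
  have hinj : Function.Injective ψ := by
    rw [injective_iff_map_eq_one]
    intro x hx
    rw [hψ] at hx
    have hval0 : (0 : ZMod 2).val = 0 := rfl
    have hval1 : (1 : ZMod 2).val = 1 := rfl
    have hx1 : x = Multiplicative.ofAdd (x.toAdd.1, x.toAdd.2) := rfl
    rcases hz x.toAdd.1 with e1 | e1 <;> rcases hz x.toAdd.2 with e2 | e2 <;>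
      rw [e1, e2] at hx <;>
      simp only [hval0, hval1, pow_zero, pow_one, one_mul, mul_one] at hx
    · rw [hx1, e1, e2]; rfl
    · exact absurd hx hvne
    · exact absurd hx hune
    · exact absurd hx huvne
  have humem : u ∈ ({u, v} : Set GI) := Or.inl rfl
  have hvmem : v ∈ ({u, v} : Set GI) := Or.inr rfl
  have hrange : Subgroup.closure ({u, v} : Set GI) = ψ.range := by
    apply le_antisymm
    · rw [Subgroup.closure_le]
      rintro w hw
      rcases hw with rfl | rfl
      · refine ⟨Multiplicative.ofAdd (1, 0), ?_⟩
        rw [hψ]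
        simp only [toAdd_ofAdd]
        rw [show ((1 : ZMod 2)).val = 1 from rfl, show ((0 : ZMod 2)).val = 0 from rfl,
          pow_one, pow_zero, mul_one]
      · refine ⟨Multiplicative.ofAdd (0, 1), ?_⟩
        rw [hψ]
        simp only [toAdd_ofAdd]
        rw [show ((1 : ZMod 2)).val = 1 from rfl, show ((0 : ZMod 2)).val = 0 from rfl,
          pow_one, pow_zero, one_mul]
    · rintro w ⟨x, rfl⟩
      rw [hψ]
      exact mul_mem (pow_mem (Subgroup.subset_closure humem) _)
        (pow_mem (Subgroup.subset_closure hvmem) _)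
  exact ⟨hu2, hv2, huv, hρu, hρv,
    ⟨(MulEquiv.subgroupCongr hrange).trans (MonoidHom.ofInjective hinj).symm⟩⟩


end Stmt5
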